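/- Let p = 2p'+1 and q = 2q'+1 be distinct safe primes with p', q' distinct odd primes, N = pq. If x ∈ (Z/NZ)* is a uniformly random element, the probability that ord(x) is divisible by p'q' is at least 1 - 1/p' - 1/q' (so the RSW sequence of a random x has large order except with small probability). -/
import Mathlib

open Finset

lemma bad_count {G : Type*} [CommGroup G] [Fintype G] [DecidableEq G] (r n : ℕ)
    (hr : r.Prime) (hrn : ¬ r ∣ n) (hcard : Fintype.card G = r * n) :
    (Finset.univ.filter (fun x : G => ¬ r ∣ orderOf x)).card ≤ n := by
  classical
  have hn0 : 0 < n := by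
    rcases Nat.eq_zero_or_pos n with h | h
    · exfalso; rw [h, mul_zero] at hcard; have := Fintype.card_pos (α := G); omega
    · exact h
  set H : Subgroup G :=
    { carrier := {x | x ^ n = 1}
      mul_mem' := by intro a b ha hb; simp only [Set.mem_setOf_eq] at *; rw [mul_pow, ha, hb, mul_one]
      one_mem' := by simp
      inv_mem' := by intro a ha; simp only [Set.mem_setOf_eq] at *; rw [inv_pow, ha, inv_one] } with hH
  have hsub : (Finset.univ.filter (fun x : G => ¬ r ∣ orderOf x)) ⊆ H.carrier.toFinset := by
    intro x hx
    simp only [mem_filter, mem_univ, true_and] at hx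
    have hdvd : orderOf x ∣ r * n := hcard ▸ orderOf_dvd_card
    have hcop : Nat.Coprime (orderOf x) r := ((hr.coprime_iff_not_dvd).mpr hx).symm
    have : orderOf x ∣ n := (Nat.Coprime.dvd_of_dvd_mul_left hcop hdvd)
    simp [hH, Set.mem_toFinset, orderOf_dvd_iff_pow_eq_one.mp this]
  have hHcard : Nat.card H ∣ r * n := by
    have := Subgroup.card_subgroup_dvd_card H
    rwa [Nat.card_eq_fintype_card (α := G), hcard] at this
  have hnr : ¬ r ∣ Nat.card H := by
    intro hdvd
    haveI : Fact r.Prime := ⟨hr⟩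
    rw [Nat.card_eq_fintype_card] at hdvd
    obtain ⟨y, hy⟩ := exists_prime_orderOf_dvd_card (G := H) r hdvd
    have hyn : y ^ n = 1 := by
      have := y.2
      simp only [hH, Subgroup.mem_mk, Set.mem_setOf_eq] at this
      ext; push_cast; exact this
    exact hrn (hy ▸ orderOf_dvd_iff_pow_eq_one.mpr hyn)
  have hcop : Nat.Coprime (Nat.card H) r := ((hr.coprime_iff_not_dvd).mpr hnr).symm
  have hdvdn : Nat.card H ∣ n := Nat.Coprime.dvd_of_dvd_mul_left hcop hHcard
  calc (Finset.univ.filter (fun x : G => ¬ r ∣ orderOf x)).card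
      ≤ H.carrier.toFinset.card := Finset.card_le_card hsub
    _ = Nat.card H := by rw [Set.toFinset_card, ← Nat.card_eq_fintype_card]; rfl
    _ ≤ n := Nat.le_of_dvd hn0 hdvdn

theorem random_element_large_order (p q p' q' : ℕ)
    (hp : p.Prime) (hq : q.Prime) (hp' : p'.Prime) (hq' : q'.Prime)
    (hop : Odd p') (hoq : Odd q') (hne' : p' ≠ q')
    (hpe : p = 2 * p' + 1) (hqe : q = 2 * q' + 1) (hne : p ≠ q)
    (N : ℕ) (hN : N = p * q) :
    (1 : ℚ) - 1 / p' - 1 / q' ≤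
      (Nat.card {x : (ZMod N)ˣ // p' * q' ∣ orderOf x} : ℚ) /
        (Nat.card (ZMod N)ˣ : ℚ) := by
  classical
  haveI : NeZero N := ⟨by rw [hN]; exact Nat.mul_ne_zero hp.pos.ne' hq.pos.ne'⟩
  set G := (ZMod N)ˣ
  -- card of the unit group
  have hcard : Fintype.card G = 2 * p' * (2 * q') := by
    have h1 : Fintype.card G = N.totient := ZMod.card_units_eq_totient N
    rw [h1, hN, Nat.totient_mul ((Nat.coprime_primes hp hq).mpr hne),
      Nat.totient_prime hp, Nat.totient_prime hq, hpe, hqe]; simp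
  -- p' does not divide 4 * q' and vice versa
  have hnd : ∀ a b : ℕ, a.Prime → b.Prime → Odd a → a ≠ b → ¬ a ∣ 4 * b := by
    intro a b ha hb hoa hab h
    rcases (Nat.Prime.dvd_mul ha).mp h with h4 | hbb
    · have : a ∣ 2 := ha.dvd_of_dvd_pow (n := 2) (by simpa [pow_two] using h4)
      have := (Nat.prime_dvd_prime_iff_eq ha Nat.prime_two).mp this
      rw [this] at hoa; exact (Nat.not_odd_iff_even.mpr even_two) hoa
    · exact hab ((Nat.prime_dvd_prime_iff_eq ha hb).mp hbb)
  -- bad counts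
  have hb1 : (Finset.univ.filter (fun x : G => ¬ p' ∣ orderOf x)).card ≤ 4 * q' :=
    bad_count p' (4 * q') hp' (hnd p' q' hp' hq' hop hne') (by rw [hcard]; ring)
  have hb2 : (Finset.univ.filter (fun x : G => ¬ q' ∣ orderOf x)).card ≤ 4 * p' :=
    bad_count q' (4 * p') hq' (hnd q' p' hq' hp' hoq hne'.symm) (by rw [hcard]; ring)
  set C := Finset.univ.filter (fun x : G => p' * q' ∣ orderOf x) with hC
  have hcop : Nat.Coprime p' q' := (Nat.coprime_primes hp' hq').mpr hne'
  have hCc : Cᶜ ⊆ (Finset.univ.filter (fun x : G => ¬ p' ∣ orderOf x)) ∪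
      (Finset.univ.filter (fun x : G => ¬ q' ∣ orderOf x)) := by
    intro x hx
    simp only [hC, Finset.mem_compl, Finset.mem_filter, Finset.mem_univ, true_and,
      Finset.mem_union] at *
    by_contra hcon
    push_neg at hcon
    exact hx (hcop.mul_dvd_of_dvd_of_dvd hcon.1 hcon.2)
  have hkey : 2 * p' * (2 * q') ≤ C.card + (4 * q' + 4 * p') := by
    have h1 : C.card + Cᶜ.card = Fintype.card G := Finset.card_add_card_compl C
    have h2 : Cᶜ.card ≤ 4 * q' + 4 * p' :=
      le_trans (Finset.card_le_card hCc) (le_trans (Finset.card_union_le _ _) (by omega))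
    omega
  -- translate Nat.card of the subtype
  have hsub : Nat.card {x : G // p' * q' ∣ orderOf x} = C.card := by
    rw [Nat.card_eq_fintype_card, hC, Fintype.card_subtype]
  have hGcard : Nat.card G = 2 * p' * (2 * q') := by rw [Nat.card_eq_fintype_card, hcard]
  rw [hsub, hGcard]
  have hp0 : (0:ℚ) < (p' : ℚ) := by exact_mod_cast hp'.pos
  have hq0 : (0:ℚ) < (q' : ℚ) := by exact_mod_cast hq'.pos
  rw [le_div_iff₀ (by exact_mod_cast Nat.mul_pos (Nat.mul_pos two_pos hp'.pos) (Nat.mul_pos two_pos hq'.pos))]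
  have hkeyQ : (2 * p' * (2 * q') : ℚ) ≤ (C.card : ℚ) + (4 * q' + 4 * p') := by
    exact_mod_cast hkey
  push_cast
  push_cast at hkeyQ
  have : ((1:ℚ) - 1 / p' - 1 / q') * (2 * p' * (2 * q')) =
      2 * (p':ℚ) * (2 * q') - 4 * q' - 4 * p' := by
    field_simp; ring
  rw [this]
  linarith
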